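/- arXiv:2502.06793 — 2 statements merged into one kernel-verified Lean document; each statement's English description precedes it below -/
import Mathlib

section
/- Let μ be a probability measure with finite variance on an extended metric space Y, let ȳ be a barycenter of μ (i.e., a minimizer of x ↦ ∫ d_Y(x,z)^2 dμ(z)), and suppose there exists an EVI_K gradient flow {y_t} of a lower semicontinuous functional E starting from ȳ. Then Jensen's inequality holds: E(ȳ) ≤ ∫_Y E(z) dμ(z) − (K/2) ∫_Y d_Y(ȳ,z)^2 dμ(z). -/
open MeasureTheory Set Filter
open scoped ENNReal

/-- The squared distance from a curve to a point. -/
noncomputable def dsq {Y : Type*} [EMetricSpace Y] (y : ℝ → Y) (z : Y) (τ : ℝ) : ℝ :=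
  (edist (y τ) z).toReal ^ 2

lemma ennreal_sq_add (a b : ℝ≥0∞) : (a + b) ^ 2 ≤ 4 * a ^ 2 + 4 * b ^ 2 := by
  have h : a * b ≤ a ^ 2 + b ^ 2 := by
    rcases le_total a b with h | h
    · calc a * b ≤ b * b := mul_le_mul_left h b
        _ ≤ _ := by rw [← sq]; exact le_add_self
    · calc a * b ≤ a * a := mul_le_mul_right h a
        _ ≤ _ := by rw [← sq]; exact le_add_right le_rfl
  calc (a + b) ^ 2 = a ^ 2 + b ^ 2 + (a * b + a * b) := by ring
    _ ≤ a ^ 2 + b ^ 2 + ((a ^ 2 + b ^ 2) + (a ^ 2 + b ^ 2)) := by gcongr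
    _ ≤ _ := by ring_nf; gcongr <;> norm_num

lemma sq_dist_bound {Y : Type*} [EMetricSpace Y] (p q z : Y) (ε : ℝ) (hε : 0 < ε)
    (hpq : edist p q < ENNReal.ofReal ε) (hqz : edist q z ≠ ⊤) :
    |(edist p z).toReal ^ 2 - (edist q z).toReal ^ 2| ≤
      2 * ε * (edist q z).toReal + ε ^ 2 := by
  have he' : edist p q ≠ ⊤ := (hpq.trans_le le_top).ne
  have heε : (edist p q).toReal < ε := ENNReal.toReal_lt_of_lt_ofReal hpq
  have hfin1 : edist p q + edist q z ≠ ⊤ := by simp [ENNReal.add_eq_top, he', hqz]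
  have h1 : (edist p z).toReal ≤ (edist p q).toReal + (edist q z).toReal := by
    rw [← ENNReal.toReal_add he' hqz]
    exact ENNReal.toReal_mono hfin1 (edist_triangle _ _ _)
  have hfinu : edist p z ≠ ⊤ := ((edist_triangle p q z).trans_lt hfin1.lt_top).ne
  have h2 : (edist q z).toReal ≤ (edist p q).toReal + (edist p z).toReal := by
    rw [← ENNReal.toReal_add he' hfinu]
    refine ENNReal.toReal_mono (by simp [ENNReal.add_eq_top, he', hfinu]) ?_
    rw [edist_comm p q]
    exact edist_triangle q p z
  have hn1 : (0:ℝ) ≤ (edist p z).toReal := ENNReal.toReal_nonneg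
  have hn2 : (0:ℝ) ≤ (edist q z).toReal := ENNReal.toReal_nonneg
  have hn3 : (0:ℝ) ≤ (edist p q).toReal := ENNReal.toReal_nonneg
  rw [abs_le]
  constructor <;> nlinarith

lemma eps_choice (Kk I Δ : ℝ) (hI : 0 ≤ I) (hΔ : 0 < Δ) (hK : 0 ≤ Kk) :
    ∃ ε : ℝ, 0 < ε ∧ ε ≤ 1 ∧ Kk * (2 * ε * I + ε ^ 2) < 2 * Δ := by
  refine ⟨min 1 (Δ / (Kk * (2 * I + 1) + 1)), lt_min one_pos (div_pos hΔ (by positivity)),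
    min_le_left _ _, ?_⟩
  have h2 : min 1 (Δ / (Kk * (2 * I + 1) + 1)) ≤ Δ / (Kk * (2 * I + 1) + 1) := min_le_right _ _
  have h3 : min 1 (Δ / (Kk * (2 * I + 1) + 1)) * (Kk * (2 * I + 1) + 1) ≤ Δ := by
    rw [← le_div_iff₀ (by positivity)]; exact h2
  have h4 : 0 < min 1 (Δ / (Kk * (2 * I + 1) + 1)) :=
    lt_min one_pos (div_pos hΔ (by positivity))
  have h5 : min 1 (Δ / (Kk * (2 * I + 1) + 1)) ≤ 1 := min_le_left _ _
  nlinarith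

/-- Jensen's inequality from `EVI_K` gradient flows: if `ȳ = y 0` is a barycenter of a
finite-variance probability measure `μ` and `{y_t}` is an `EVI_K` gradient flow of a
lower semicontinuous `E` starting from `ȳ` (a locally absolutely continuous curve,
converging to `ȳ` as `t → 0⁺`, along which
`(1/2)(d/dt)d(y_t,z)² + (K/2)d(y_t,z)² ≤ E(z) − E(y_t)` a.e. for each admissible `z`),
then `E(ȳ) ≤ ∫ E dμ − (K/2)∫ d(ȳ,z)² dμ`. -/
theorem stmt_2 {Y : Type*} [EMetricSpace Y] [MeasurableSpace Y] [BorelSpace Y] (K : ℝ)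
    (E : Y → EReal) (hEbot : ∀ x, E x ≠ ⊥) (hElsc : LowerSemicontinuous E)
    (μ : Measure Y) [IsProbabilityMeasure μ]
    (hVar : (⨅ x : Y, ∫⁻ z, edist x z ^ 2 ∂μ) < ⊤)
    (hEae : ∀ᵐ z ∂μ, E z ≠ ⊤)
    (hEint : Integrable (fun z => (E z).toReal) μ)
    (y : ℝ → Y)
    (hbar : (∫⁻ z, edist (y 0) z ^ 2 ∂μ) = ⨅ x : Y, ∫⁻ z, edist x z ^ 2 ∂μ)
    (hinit : Tendsto y (nhdsWithin 0 (Set.Ioi 0)) (nhds (y 0)))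
    (hEVI : ∀ z : Y, E z ≠ ⊤ → (∃ t : ℝ, 0 < t ∧ edist z (y t) ≠ ⊤) →
      ∃ g : ℝ → ℝ,
        (∀ s t : ℝ, 0 ≤ s → s ≤ t →
          IntervalIntegrable g volume s t ∧
          dsq y z t - dsq y z s = ∫ τ in s..t, g τ) ∧
        (∀ᵐ τ ∂(volume.restrict (Set.Ioi (0:ℝ))),
          HasDerivAt (dsq y z) (g τ) τ ∧
          ((g τ / 2 + K / 2 * dsq y z τ : ℝ) : EReal) ≤ E z - E (y τ))) :
    E (y 0) ≤ (((∫ z, (E z).toReal ∂μ) -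
      K / 2 * (∫⁻ z, edist (y 0) z ^ 2 ∂μ).toReal : ℝ) : EReal) := by
  by_contra hcon
  have hlt : (((∫ z, (E z).toReal ∂μ) -
      K / 2 * (∫⁻ z, edist (y 0) z ^ 2 ∂μ).toReal : ℝ) : EReal) < E (y 0) := lt_of_not_ge hcon
  have hVfin : (∫⁻ z, edist (y 0) z ^ 2 ∂μ) ≠ ⊤ := by rw [hbar]; exact hVar.ne
  obtain ⟨c, hc1, hc2⟩ := EReal.exists_between_coe_real hlt
  have hc1' : (∫ z, (E z).toReal ∂μ) -
      K / 2 * (∫⁻ z, edist (y 0) z ^ 2 ∂μ).toReal < c := by exact_mod_cast hc1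
  -- measurability and basic integrability
  have hmed : ∀ x : Y, Measurable fun z => edist x z := fun x =>
    (continuous_const.edist continuous_id).measurable
  have hmed2 : ∀ x : Y, Measurable fun z => edist x z ^ 2 := fun x => (hmed x).pow_const 2
  have key_int : ∀ x : Y, (∫⁻ z, edist x z ^ 2 ∂μ) ≠ ⊤ →
      Integrable (fun z => (edist x z).toReal ^ 2) μ ∧
      ∫ z, (edist x z).toReal ^ 2 ∂μ = (∫⁻ z, edist x z ^ 2 ∂μ).toReal := by
    intro x hx
    have h1 : Integrable (fun z => (edist x z ^ 2).toReal) μ :=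
      integrable_toReal_of_lintegral_ne_top (hmed2 x).aemeasurable hx
    have he : (fun z => (edist x z).toReal ^ 2) = fun z => (edist x z ^ 2).toReal := by
      ext z; rw [ENNReal.toReal_pow]
    refine ⟨he ▸ h1, ?_⟩
    rw [he, integral_toReal (hmed2 x).aemeasurable (ae_lt_top (hmed2 x) hx)]
  have Int0 : Integrable (fun z => dsq y z 0) μ := by
    have := (key_int (y 0) hVfin).1
    simpa [dsq] using this
  have hIntV : ∫ z, dsq y z 0 ∂μ = (∫⁻ z, edist (y 0) z ^ 2 ∂μ).toReal := by
    have := (key_int (y 0) hVfin).2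
    simpa [dsq] using this
  have ha'nonneg : ∀ z : Y, (0:ℝ) ≤ (edist (y 0) z).toReal := fun z => ENNReal.toReal_nonneg
  have Inta : Integrable (fun z => (edist (y 0) z).toReal) μ := by
    have hb : Integrable (fun z => 1 + dsq y z 0) μ := (integrable_const 1).add Int0
    refine hb.mono' ((hmed (y 0)).ennreal_toReal.aestronglyMeasurable) (ae_of_all _ fun z => ?_)
    rw [Real.norm_of_nonneg (ha'nonneg z)]
    have hd : dsq y z 0 = (edist (y 0) z).toReal ^ 2 := rfl
    nlinarith [ha'nonneg z, sq_nonneg ((edist (y 0) z).toReal - 1)]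
  have hI₁nonneg : (0:ℝ) ≤ ∫ z, (edist (y 0) z).toReal ∂μ := integral_nonneg ha'nonneg
  -- choose ε
  obtain ⟨ε, hεpos, hε1, hεΔ⟩ := eps_choice |K| (∫ z, (edist (y 0) z).toReal ∂μ)
    (c - ((∫ z, (E z).toReal ∂μ) - K / 2 * (∫⁻ z, edist (y 0) z ^ 2 ∂μ).toReal))
    hI₁nonneg (by linarith) (abs_nonneg K)
  -- choose δ from lower semicontinuity and initial condition
  have hev1 : ∀ᶠ τ in nhdsWithin 0 (Set.Ioi 0), (c : EReal) < E (y τ) :=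
    hinit.eventually (hElsc (y 0) c hc2)
  have hev2 : ∀ᶠ τ in nhdsWithin 0 (Set.Ioi 0), edist (y τ) (y 0) < ENNReal.ofReal ε :=
    EMetric.tendsto_nhds.mp hinit (ENNReal.ofReal ε) (by positivity)
  obtain ⟨δ, hδpos, hδsub⟩ : ∃ δ > 0, Ioo 0 δ ⊆
      {τ | (c : EReal) < E (y τ) ∧ edist (y τ) (y 0) < ENNReal.ofReal ε} := by
    rcases mem_nhdsGT_iff_exists_Ioo_subset.mp (hev1.and hev2) with ⟨u, hu, hsub⟩
    exact ⟨u, hu, hsub⟩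
  obtain ⟨t, htpos, htδ⟩ : ∃ t : ℝ, 0 < t ∧ t < δ := ⟨δ / 2, by positivity, by linarith⟩
  have htmem : t ∈ Ioo 0 δ := ⟨htpos, htδ⟩
  have hedist_t : edist (y t) (y 0) < ENNReal.ofReal ε := (hδsub htmem).2
  -- good z's
  have hgood : ∀ᵐ z ∂μ, E z ≠ ⊤ ∧ edist (y 0) z ≠ ⊤ := by
    filter_upwards [hEae, ae_lt_top (hmed2 (y 0)) hVfin] with z h1 h2
    refine ⟨h1, fun h => ?_⟩
    rw [h] at h2
    simp [pow_two] at h2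
  -- the key pointwise claim
  have claim : ∀ᵐ z ∂μ, dsq y z t - dsq y z 0 ≤
      2 * t * ((E z).toReal - c) - K * t * dsq y z 0 +
        |K| * t * (2 * ε * (edist (y 0) z).toReal + ε ^ 2) := by
    filter_upwards [hgood] with z hz
    obtain ⟨hz1, hz2⟩ := hz
    have hzy : edist z (y t) ≠ ⊤ := by
      have h1 : edist z (y t) ≤ edist z (y 0) + edist (y 0) (y t) := edist_triangle _ _ _
      have h2 : edist z (y 0) + edist (y 0) (y t) < ⊤ := by
        apply ENNReal.add_lt_top.mpr
        refine ⟨?_, ?_⟩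
        · rw [edist_comm]; exact hz2.lt_top
        · rw [edist_comm]; exact hedist_t.trans_le le_top
      exact (h1.trans_lt h2).ne
    obtain ⟨g, hFTC, hae⟩ := hEVI z hz1 ⟨t, htpos, hzy⟩
    have hEz : E z = (((E z).toReal : ℝ) : EReal) := (EReal.coe_toReal hz1 (hEbot z)).symm
    -- pointwise bounds on dsq on Icc 0 t
    have ptbound : ∀ τ ∈ Icc (0:ℝ) t,
        dsq y z 0 - (2 * ε * (edist (y 0) z).toReal + ε ^ 2) ≤ dsq y z τ ∧
        dsq y z τ ≤ dsq y z 0 + (2 * ε * (edist (y 0) z).toReal + ε ^ 2) := by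
      intro τ hτ
      rcases eq_or_lt_of_le hτ.1 with h0 | h0
      · rw [← h0]
        constructor <;> nlinarith [ha'nonneg z, hεpos.le, sq_nonneg ε]
      · have hτδ : τ ∈ Ioo 0 δ := ⟨h0, lt_of_le_of_lt hτ.2 htδ⟩
        have h := sq_dist_bound (y τ) (y 0) z ε hεpos (hδsub hτδ).2 hz2
        rw [abs_le] at h
        have hd0 : dsq y z 0 = (edist (y 0) z).toReal ^ 2 := rfl
        have hdτ : dsq y z τ = (edist (y τ) z).toReal ^ 2 := rfl
        constructor <;> [linarith [h.1]; linarith [h.2]]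
    -- continuity and integrability of dsq on [0, t]
    have hgint : IntervalIntegrable g volume 0 t := (hFTC 0 t le_rfl htpos.le).1
    have hcontF : ContinuousOn (fun b => ∫ x in (0:ℝ)..b, g x) (Icc 0 t) := by
      have := intervalIntegral.continuousOn_primitive_interval' hgint
        (left_mem_uIcc (a := (0:ℝ)) (b := t))
      rwa [uIcc_of_le htpos.le] at this
    have hcontD : ContinuousOn (dsq y z) (Icc 0 t) := by
      have heq : ∀ τ ∈ Icc (0:ℝ) t, dsq y z 0 + ∫ x in (0:ℝ)..τ, g x = dsq y z τ := by
        intro τ hτ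
        have := (hFTC 0 τ le_rfl hτ.1).2
        linarith
      exact ContinuousOn.congr (continuousOn_const.add hcontF) fun τ hτ => (heq τ hτ).symm
    have dsqInt : IntervalIntegrable (dsq y z) volume 0 t := by
      apply ContinuousOn.intervalIntegrable
      rwa [uIcc_of_le htpos.le]
    -- a.e. bound on g
    have hg_le : g ≤ᵐ[volume.restrict (Icc 0 t)]
        fun τ => 2 * ((E z).toReal - c) - K * dsq y z τ := by
      rw [← Measure.restrict_congr_set Ioc_ae_eq_Icc]
      filter_upwards [ae_restrict_of_ae_restrict_of_subset Ioc_subset_Ioi_self hae,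
        ae_restrict_mem measurableSet_Ioc] with τ hP hτ
      obtain ⟨-, hineq⟩ := hP
      have hτδ : τ ∈ Ioo 0 δ := ⟨hτ.1, lt_of_le_of_lt hτ.2 htδ⟩
      have hcτ : (c : EReal) < E (y τ) := (hδsub hτδ).1
      have hyτtop : E (y τ) ≠ ⊤ := by
        intro h
        rw [h, hEz] at hineq
        simp at hineq
        rw [← EReal.coe_mul] at hineq
        exact EReal.coe_ne_bot _ hineq
      have hEyτ : E (y τ) = (((E (y τ)).toReal : ℝ) : EReal) :=
        (EReal.coe_toReal hyτtop (hEbot (y τ))).symm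
      have hcw : c < (E (y τ)).toReal := by
        rw [hEyτ] at hcτ; exact_mod_cast hcτ
      rw [hEz, hEyτ] at hineq
      have hineq' : g τ / 2 + K / 2 * dsq y z τ ≤ (E z).toReal - (E (y τ)).toReal := by
        rw [show ((E z).toReal : EReal) - ((E (y τ)).toReal : EReal) =
          (((E z).toReal - (E (y τ)).toReal : ℝ) : EReal) by norm_cast] at hineq
        exact_mod_cast hineq
      linarith
    have hInth : IntervalIntegrable (fun τ => 2 * ((E z).toReal - c) - K * dsq y z τ) volume 0 t :=
      intervalIntegrable_const.sub (dsqInt.const_mul K)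
    -- integrate the EVI bound
    have key1 : dsq y z t - dsq y z 0 ≤
        2 * ((E z).toReal - c) * t - K * ∫ τ in (0:ℝ)..t, dsq y z τ := by
      rw [(hFTC 0 t le_rfl htpos.le).2]
      calc (∫ τ in (0:ℝ)..t, g τ)
          ≤ ∫ τ in (0:ℝ)..t, (2 * ((E z).toReal - c) - K * dsq y z τ) :=
            intervalIntegral.integral_mono_ae_restrict htpos.le hgint hInth hg_le
        _ = 2 * ((E z).toReal - c) * t - K * ∫ τ in (0:ℝ)..t, dsq y z τ := by
            rw [intervalIntegral.integral_sub intervalIntegrable_const (dsqInt.const_mul K),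
              intervalIntegral.integral_const, intervalIntegral.integral_const_mul]
            simp [mul_comm]
    -- bounds on the time integral of dsq
    have hlow : t * (dsq y z 0 - (2 * ε * (edist (y 0) z).toReal + ε ^ 2)) ≤
        ∫ τ in (0:ℝ)..t, dsq y z τ := by
      have := intervalIntegral.integral_mono_on htpos.le intervalIntegrable_const dsqInt
        (g := dsq y z)
        (f := fun _ => dsq y z 0 - (2 * ε * (edist (y 0) z).toReal + ε ^ 2))
        (fun τ hτ => (ptbound τ hτ).1)
      rw [intervalIntegral.integral_const, smul_eq_mul, sub_zero] at this
      exact this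
    have hhigh : (∫ τ in (0:ℝ)..t, dsq y z τ) ≤
        t * (dsq y z 0 + (2 * ε * (edist (y 0) z).toReal + ε ^ 2)) := by
      have := intervalIntegral.integral_mono_on htpos.le dsqInt intervalIntegrable_const
        (f := dsq y z)
        (g := fun _ => dsq y z 0 + (2 * ε * (edist (y 0) z).toReal + ε ^ 2))
        (fun τ hτ => (ptbound τ hτ).2)
      rw [intervalIntegral.integral_const, smul_eq_mul, sub_zero] at this
      exact this
    -- combine
    rcases le_or_gt 0 K with hK | hK
    · rw [abs_of_nonneg hK]
      nlinarith [mul_le_mul_of_nonneg_left hlow hK]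
    · rw [abs_of_neg hK]
      nlinarith [mul_le_mul_of_nonpos_left hhigh hK.le]
  -- finiteness of the variance at time t
  have hfin_t : (∫⁻ z, edist (y t) z ^ 2 ∂μ) ≠ ⊤ := by
    have hbound : ∀ z, edist (y t) z ^ 2 ≤
        4 * edist (y t) (y 0) ^ 2 + 4 * edist (y 0) z ^ 2 := by
      intro z
      calc edist (y t) z ^ 2 ≤ (edist (y t) (y 0) + edist (y 0) z) ^ 2 := by
            gcongr; exact edist_triangle _ _ _
        _ ≤ _ := ennreal_sq_add _ _
    have h1 : (∫⁻ z, edist (y t) z ^ 2 ∂μ) ≤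
        ∫⁻ z, (4 * edist (y t) (y 0) ^ 2 + 4 * edist (y 0) z ^ 2) ∂μ :=
      lintegral_mono hbound
    have h2 : (∫⁻ z, (4 * edist (y t) (y 0) ^ 2 + 4 * edist (y 0) z ^ 2) ∂μ) =
        4 * edist (y t) (y 0) ^ 2 + 4 * ∫⁻ z, edist (y 0) z ^ 2 ∂μ := by
      rw [lintegral_add_left (by measurability), lintegral_const_mul 4 (hmed2 (y 0)),
        lintegral_const]
      simp
    refine (h1.trans_lt ?_).ne
    rw [h2]
    apply ENNReal.add_lt_top.mpr
    constructor
    · exact ENNReal.mul_lt_top (by norm_num) (ENNReal.pow_lt_top (hedist_t.trans_le le_top))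
    · exact ENNReal.mul_lt_top (by norm_num) hVfin.lt_top
  have Intt : Integrable (fun z => dsq y z t) μ := by
    have := (key_int (y t) hfin_t).1
    simpa [dsq] using this
  have hbart : (∫⁻ z, edist (y 0) z ^ 2 ∂μ).toReal ≤ ∫ z, dsq y z t ∂μ := by
    have heq : ∫ z, dsq y z t ∂μ = (∫⁻ z, edist (y t) z ^ 2 ∂μ).toReal := by
      have := (key_int (y t) hfin_t).2
      simpa [dsq] using this
    rw [heq]
    apply ENNReal.toReal_mono hfin_t
    rw [hbar]
    exact iInf_le _ (y t)
  -- integrate the claim over μ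
  have hA1 : Integrable (fun z => 2 * t * ((E z).toReal - c)) μ := by
    exact (hEint.sub (integrable_const c)).const_mul _
  have hA2 : Integrable (fun z => K * t * dsq y z 0) μ := by
    exact Int0.const_mul _
  have hA : Integrable (fun z => 2 * t * ((E z).toReal - c) - K * t * dsq y z 0) μ := by
    exact hA1.sub hA2
  have hB1 : Integrable (fun z => 2 * ε * (edist (y 0) z).toReal) μ := by
    exact Inta.const_mul _
  have hB : Integrable (fun z => |K| * t * (2 * ε * (edist (y 0) z).toReal + ε ^ 2)) μ := by
    exact (hB1.add (integrable_const (ε ^ 2))).const_mul _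
  have IntRHS : Integrable (fun z =>
      2 * t * ((E z).toReal - c) - K * t * dsq y z 0 +
        |K| * t * (2 * ε * (edist (y 0) z).toReal + ε ^ 2)) μ := by
    exact hA.add hB
  have hRHS : ∫ z, (2 * t * ((E z).toReal - c) - K * t * dsq y z 0
      + |K| * t * (2 * ε * (edist (y 0) z).toReal + ε ^ 2)) ∂μ
      = 2 * t * ((∫ z, (E z).toReal ∂μ) - c)
        - K * t * (∫⁻ z, edist (y 0) z ^ 2 ∂μ).toReal
        + |K| * t * (2 * ε * (∫ z, (edist (y 0) z).toReal ∂μ) + ε ^ 2) := by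
    rw [integral_add hA hB, integral_sub hA1 hA2,
      integral_const_mul, integral_const_mul, integral_const_mul,
      integral_sub hEint (integrable_const c),
      integral_add hB1 (integrable_const _),
      integral_const_mul, integral_const, integral_const, hIntV]
    simp [measure_univ]
  have hle : (∫ z, dsq y z t ∂μ) - (∫ z, dsq y z 0 ∂μ) ≤
      2 * t * ((∫ z, (E z).toReal ∂μ) - c)
        - K * t * (∫⁻ z, edist (y 0) z ^ 2 ∂μ).toReal
        + |K| * t * (2 * ε * (∫ z, (edist (y 0) z).toReal ∂μ) + ε ^ 2) := by
    rw [← integral_sub Intt Int0, ← hRHS]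
    exact integral_mono_ae (Intt.sub Int0) IntRHS claim
  rw [hIntV] at hle
  -- final contradiction
  nlinarith [mul_lt_mul_of_pos_left hεΔ htpos, hbart, hle, htpos]
end

section
/- On the real line with Lebesgue measure, the Boltzmann entropy is displacement convex: if μ_0 = ρ_0 ℒ and μ_1 = ρ_1 ℒ are absolutely continuous probability measures with finite second moment and finite entropy, and (μ_t) is the W_2-geodesic between them (given by the monotone rearrangement interpolation), then Ent_ℒ(μ_t) ≤ (1−t)Ent_ℒ(μ_0) + t Ent_ℒ(μ_1) for all t ∈ [0,1]. -/
open MeasureTheory Set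
open scoped Classical ENNReal

/-- The Boltzmann entropy `Ent_m(μ) = ∫ ρ log ρ dm` if `μ = ρ m`, and `+∞` otherwise. -/
noncomputable def entropy {X : Type*} [MeasurableSpace X] (m μ : Measure X) : EReal :=
  open scoped Classical in
  if μ ≪ m ∧ Integrable
      (fun x => (μ.rnDeriv m x).toReal * Real.log (μ.rnDeriv m x).toReal) m then
    (((∫ x, (μ.rnDeriv m x).toReal * Real.log (μ.rnDeriv m x).toReal ∂m) : ℝ) : EReal)
  else ⊤


-- auxiliary lemmas

lemma deriv_zero_of_const_seg {f : ℝ → ℝ} (hf : Monotone f) {x y d : ℝ} (hxy : x < y)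
    (hfd : HasDerivAt f d x) (hxyf : f x = f y) : d = 0 := by
  have h1 : Filter.Tendsto (slope f x) (nhdsWithin x (Set.Ioi x)) (nhds d) :=
    (hasDerivAt_iff_tendsto_slope.mp hfd).mono_left
      (nhdsWithin_mono x fun z hz => ne_of_gt hz)
  have h2 : ∀ᶠ z in nhdsWithin x (Set.Ioi x), slope f x z = 0 := by
    filter_upwards [Ioo_mem_nhdsGT_of_mem (Set.left_mem_Ico.mpr hxy)] with z hz
    have h3 : f z = f x := le_antisymm (hxyf ▸ hf hz.2.le) (hf hz.1.le)
    simp [slope, h3]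
  have h4 : Filter.Tendsto (slope f x) (nhdsWithin x (Set.Ioi x)) (nhds 0) := by
    rw [Filter.tendsto_congr' h2]; exact tendsto_const_nhds
  exact tendsto_nhds_unique h1 h4

lemma deriv_nonneg_of_monotone {f : ℝ → ℝ} (hf : Monotone f) {x d : ℝ}
    (hfd : HasDerivAt f d x) : 0 ≤ d := by
  have h1 : Filter.Tendsto (slope f x) (nhdsWithin x (Set.Ioi x)) (nhds d) :=
    (hasDerivAt_iff_tendsto_slope.mp hfd).mono_left
      (nhdsWithin_mono x fun z hz => ne_of_gt hz)
  refine ge_of_tendsto h1 ?_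
  filter_upwards [self_mem_nhdsWithin] with z hz
  simp only [slope_def_field, div_eq_mul_inv]
  exact mul_nonneg (sub_nonneg.mpr (hf (le_of_lt hz))) (inv_nonneg.mpr (sub_nonneg.mpr (le_of_lt hz)))


lemma ae_rnDeriv_zero_off (μ : Measure ℝ) [SigmaFinite μ] (hac : μ ≪ volume)
    {E : Set ℝ} (hE : MeasurableSet E) (hnull : μ Eᶜ = 0) :
    ∀ᵐ x ∂volume, x ∉ E → μ.rnDeriv volume x = 0 := by
  have hμρ : volume.withDensity (μ.rnDeriv volume) = μ :=
    Measure.withDensity_rnDeriv_eq _ _ hac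
  have h0 : ∫⁻ x in Eᶜ, μ.rnDeriv volume x ∂volume = 0 := by
    rw [← withDensity_apply _ hE.compl, hμρ]; exact hnull
  have h1 : ∀ᵐ x ∂(volume.restrict Eᶜ), μ.rnDeriv volume x = 0 :=
    (lintegral_eq_zero_iff (Measure.measurable_rnDeriv _ _)).mp h0
  exact (ae_restrict_iff' hE.compl).mp h1

lemma entropy_map (μ : Measure ℝ) [IsFiniteMeasure μ] (hac : μ ≪ volume)
    {f : ℝ → ℝ} (hf : Measurable f) {E : Set ℝ} (hE : MeasurableSet E)
    (hdiff : ∀ x ∈ E, HasDerivAt f (deriv f x) x) (hpos : ∀ x ∈ E, 0 < deriv f x)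
    (hinj : Set.InjOn f E) (hnull : μ Eᶜ = 0) :
    entropy volume (μ.map f) =
      if Integrable (fun x => (μ.rnDeriv volume x).toReal
            * Real.log (μ.rnDeriv volume x).toReal
          - (μ.rnDeriv volume x).toReal * Real.log (deriv f x)) volume then
        (((∫ x, ((μ.rnDeriv volume x).toReal * Real.log (μ.rnDeriv volume x).toReal
          - (μ.rnDeriv volume x).toReal * Real.log (deriv f x)) ∂volume) : ℝ) : EReal)
      else ⊤ := by
  classical
  set ρ : ℝ → ℝ≥0∞ := μ.rnDeriv volume with hρ_def
  have hρm : Measurable ρ := Measure.measurable_rnDeriv _ _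
  have hμρ : volume.withDensity ρ = μ := Measure.withDensity_rnDeriv_eq _ _ hac
  set r : ℝ → ℝ := fun x => (ρ x).toReal with hr_def
  set w : ℝ → ℝ≥0∞ := fun x => ρ x / ENNReal.ofReal (deriv f x) with hw_def
  have hwm : Measurable w := hρm.div (measurable_deriv f).ennreal_ofReal
  haveI : StandardBorelSpace E := hE.standardBorel
  have hinjR : Function.Injective (E.restrict f) := fun a b hab =>
    Subtype.ext (hinj a.2 b.2 hab)
  have hfE : Measurable (E.restrict f) := hf.comp measurable_subtype_coe
  obtain ⟨w', hw'm, hw'f⟩ := (hfE.measurableEmbedding hinjR).exists_measurable_extend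
      (hwm.comp measurable_subtype_coe) (fun _ => ⟨0⟩)
  have hw'E : ∀ x ∈ E, w' (f x) = w x := fun x hx => congrFun hw'f ⟨x, hx⟩
  have himE : MeasurableSet (f '' E) := hE.image_of_measurable_injOn hf hinj
  set g : ℝ → ℝ≥0∞ := (f '' E).indicator w' with hg_def
  have hgm : Measurable g := hw'm.indicator himE
  -- change of variables for lintegrals
  have cov : ∀ (s : Set ℝ), MeasurableSet s → s ⊆ E → ∀ (h : ℝ → ℝ≥0∞),
      ∫⁻ y in f '' s, h y = ∫⁻ x in s, ENNReal.ofReal |deriv f x| * h (f x) := by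
    intro s hs hsE h
    simpa only [ContinuousLinearMap.det_toSpanSingleton] using
      lintegral_image_eq_lintegral_abs_det_fderiv_mul volume hs
        (fun x hx => ((hdiff x (hsE hx)).hasDerivWithinAt).hasFDerivWithinAt)
        (hinj.mono hsE) h
  have hcancel : ∀ x ∈ E, ENNReal.ofReal |deriv f x| * w x = ρ x := by
    intro x hx
    have hd := hpos x hx
    rw [hw_def, abs_of_pos hd]
    exact ENNReal.mul_div_cancel (by simpa using hd) ENNReal.ofReal_ne_top
  -- the density identity
  have hmap : μ.map f = volume.withDensity g := by
    ext A hA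
    rw [Measure.map_apply hf hA, withDensity_apply _ hA]
    have h2 : μ (f ⁻¹' A) = μ (f ⁻¹' A ∩ E) := by
      have hd : μ (f ⁻¹' A \ E) = 0 :=
        measure_mono_null (diff_subset_compl _ _) hnull
      rw [← measure_inter_add_diff (f ⁻¹' A) hE, hd, add_zero]
    have h3 : ∫⁻ y in A, g y ∂volume = ∫⁻ y in f '' (E ∩ f ⁻¹' A), w' y ∂volume := by
      rw [hg_def, setLIntegral_indicator himE, image_inter_preimage]
    have h4 : ∫⁻ y in f '' (E ∩ f ⁻¹' A), w' y ∂volume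
        = ∫⁻ x in E ∩ f ⁻¹' A, ρ x ∂volume := by
      rw [cov _ (hE.inter (hf hA)) inter_subset_left w']
      refine setLIntegral_congr_fun (hE.inter (hf hA)) ?_
      intro x hx
      dsimp only
      rw [hw'E x hx.1, hcancel x hx.1]
    rw [h2, ← hμρ, withDensity_apply _ ((hf hA).inter hE), h3, h4, inter_comm]
  have hacg : μ.map f ≪ volume := by
    rw [hmap]; exact withDensity_absolutelyContinuous volume g
  have hrn : (μ.map f).rnDeriv volume =ᵐ[volume] g := by
    rw [hmap]; exact Measure.rnDeriv_withDensity volume hgm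
  set Gent : ℝ → ℝ := fun y => ((μ.map f).rnDeriv volume y).toReal
      * Real.log ((μ.map f).rnDeriv volume y).toReal with hGent_def
  set G : ℝ → ℝ := fun y => (g y).toReal * Real.log (g y).toReal with hG_def
  have hGent : Gent =ᵐ[volume] G := by
    filter_upwards [hrn] with y hy
    rw [hGent_def, hG_def]; simp only [hy]
  have hGind : G = (f '' E).indicator G := by
    funext y
    by_cases hy : y ∈ f '' E
    · rw [indicator_of_mem hy]
    · rw [indicator_of_notMem hy, hG_def]
      simp only [hg_def, indicator_of_notMem hy, ENNReal.toReal_zero, zero_mul]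
  set L : ℝ → ℝ := fun x => r x * Real.log (r x) - r x * Real.log (deriv f x) with hL_def
  have hkey : ∀ x ∈ E, |deriv f x| • G (f x) = L x := by
    intro x hx
    have hd := hpos x hx
    have hgf : g (f x) = w x := by
      rw [hg_def, indicator_of_mem (mem_image_of_mem f hx), hw'E x hx]
    have htr : (g (f x)).toReal = r x / deriv f x := by
      rw [hgf, hw_def]
      simp [ENNReal.toReal_div, ENNReal.toReal_ofReal hd.le, hr_def]
    rcases eq_or_ne (r x) 0 with h0 | h0
    · simp [hG_def, hL_def, htr, h0, zero_div]
    · rw [smul_eq_mul, abs_of_pos hd]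
      simp only [hG_def, hL_def]
      rw [htr, Real.log_div h0 hd.ne']
      field_simp
  have hae0 : ∀ᵐ x ∂volume, x ∉ E → ρ x = 0 := ae_rnDeriv_zero_off μ hac hE hnull
  have hLind : L =ᵐ[volume] E.indicator L := by
    filter_upwards [hae0] with x hx
    by_cases hxE : x ∈ E
    · rw [indicator_of_mem hxE]
    · rw [indicator_of_notMem hxE, hL_def]
      simp only [hr_def, hx hxE, ENNReal.toReal_zero, zero_mul, sub_zero]
  have hEderivW : ∀ x ∈ E, HasDerivWithinAt f (deriv f x) E x :=
    fun x hx => (hdiff x hx).hasDerivWithinAt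
  have hiff : Integrable L volume ↔ Integrable Gent volume := by
    rw [integrable_congr hGent, integrable_congr hLind, integrable_indicator_iff hE]
    conv_rhs => rw [hGind]
    rw [integrable_indicator_iff himE,
      integrableOn_image_iff_integrableOn_abs_deriv_smul hE hEderivW hinj G,
      integrableOn_congr_fun hkey hE]
  have hint : ∫ y, Gent y ∂volume = ∫ x, L x ∂volume := by
    rw [integral_congr_ae hGent, integral_congr_ae hLind]
    conv_lhs => rw [hGind]
    rw [integral_indicator himE,
      integral_image_eq_integral_abs_deriv_smul hE hEderivW hinj G,
      setIntegral_congr_fun hE hkey, ← integral_indicator hE]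
  by_cases hI : Integrable L volume
  · rw [if_pos hI, entropy, if_pos ⟨hacg, hiff.mp hI⟩]
    exact congrArg _ hint
  · rw [if_neg hI, entropy, if_neg]
    rintro ⟨-, h⟩
    exact hI (hiff.mpr h)

lemma ae_deriv_pos (μ₀ μ₁ : Measure ℝ) (hac₀ : μ₀ ≪ volume) (hac₁ : μ₁ ≪ volume)
    {T : ℝ → ℝ} (hTmono : Monotone T) (hTm : Measurable T) (hpush : μ₀.map T = μ₁) :
    μ₀ ({x | DifferentiableAt ℝ T x} ∩ {x | 0 < deriv T x})ᶜ = 0 := by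
  set D := {x | DifferentiableAt ℝ T x} with hD_def
  have hDm : MeasurableSet D := measurableSet_of_differentiableAt ℝ T
  set A := D ∩ {x | deriv T x = 0} with hA_def
  have hAm : MeasurableSet A := hDm.inter ((measurable_deriv T) (measurableSet_singleton 0))
  have hAim : volume (T '' A) = 0 := by
    have h1 : volume (T '' A) ≤ ∫⁻ x in A, ENNReal.ofReal |deriv T x| ∂volume := by
      simpa only [ContinuousLinearMap.det_toSpanSingleton] using
        addHaar_image_le_lintegral_abs_det_fderiv volume hAm
          (fun x hx => ((hx.1.hasDerivAt).hasDerivWithinAt).hasFDerivWithinAt)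
    have h2 : ∫⁻ x in A, ENNReal.ofReal |deriv T x| ∂volume = 0 := by
      have h3 : ∀ x ∈ A, ENNReal.ofReal |deriv T x| = (0 : ℝ≥0∞) := by
        intro x hx
        have h4 : deriv T x = 0 := hx.2
        simp [h4]
      rw [setLIntegral_congr_fun hAm h3, lintegral_zero]
    exact le_antisymm (h1.trans h2.le) zero_le
  have hμ₀A : μ₀ A = 0 := by
    have hBnull : volume (toMeasurable volume (T '' A)) = 0 := by
      rw [measure_toMeasurable]; exact hAim
    have h5 : μ₀ (T ⁻¹' (toMeasurable volume (T '' A))) = 0 := by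
      rw [← Measure.map_apply hTm (measurableSet_toMeasurable _ _), hpush]
      exact hac₁ hBnull
    exact measure_mono_null
      ((subset_preimage_image T A).trans (preimage_mono (subset_toMeasurable _ _))) h5
  have hDnull : μ₀ Dᶜ = 0 := by
    refine hac₀ ?_
    have := hTmono.ae_differentiableAt
    rwa [Filter.Eventually, MeasureTheory.mem_ae_iff] at this
  have hsub : (D ∩ {x | 0 < deriv T x})ᶜ ⊆ Dᶜ ∪ A := by
    intro x hx
    rw [mem_compl_iff, mem_inter_iff, not_and_or] at hx
    by_cases hD : x ∈ D
    · rcases hx with h | h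
      · exact absurd hD h
      · refine Or.inr ⟨hD, ?_⟩
        have hge := deriv_nonneg_of_monotone hTmono hD.hasDerivAt
        have hle : deriv T x ≤ 0 := not_lt.mp (by simpa using h)
        exact le_antisymm hle hge
    · exact Or.inl hD
  exact measure_mono_null hsub (measure_union_null hDnull hμ₀A)

lemma injOn_pos {T : ℝ → ℝ} (hTmono : Monotone T) :
    Set.InjOn T ({x | DifferentiableAt ℝ T x} ∩ {x | 0 < deriv T x}) := by
  intro a ha b hb hab
  by_contra hne
  rcases lt_or_gt_of_ne hne with h | h
  · exact absurd (deriv_zero_of_const_seg hTmono h ha.1.hasDerivAt hab) ha.2.ne'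
  · exact absurd (deriv_zero_of_const_seg hTmono h hb.1.hasDerivAt hab.symm) hb.2.ne'

lemma abs_log_combo_le {c t d : ℝ} (hc : 0 < c) (hc1 : c + t = 1) (ht : 0 ≤ t) (hd : 0 < d) :
    |Real.log (c + t * d)| ≤ |Real.log c| + |Real.log d| := by
  have htd : 0 ≤ t * d := mul_nonneg ht hd.le
  have hpos : 0 < c + t * d := by linarith
  have hlow : Real.log c ≤ Real.log (c + t * d) := Real.log_le_log hc (by linarith)
  have habsc := neg_abs_le (Real.log c)
  have habsd0 := abs_nonneg (Real.log d)
  have habsc0 := abs_nonneg (Real.log c)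
  rw [abs_le]
  constructor
  · linarith
  · rcases le_or_gt d 1 with h1 | h1
    · have h2 : c + t * d ≤ 1 := by nlinarith
      have h3 := Real.log_nonpos hpos.le h2
      linarith
    · have h2 : c + t * d ≤ d := by nlinarith
      have h3 : Real.log (c + t * d) ≤ Real.log d := Real.log_le_log hpos h2
      have h4 := le_abs_self (Real.log d)
      linarith

lemma mul_log_le {c t d : ℝ} (hc : 0 < c) (ht : 0 ≤ t) (hct : c + t = 1) (hd : 0 < d) :
    t * Real.log d ≤ Real.log (c + t * d) := by
  have h := strictConcaveOn_log_Ioi.concaveOn.2 (Set.mem_Ioi.mpr one_pos)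
      (Set.mem_Ioi.mpr hd) hc.le ht hct
  simpa [smul_eq_mul, Real.log_one] using h

/-- Displacement convexity of the Boltzmann entropy on `(ℝ, |·|, ℒ¹)`: along the
`W₂`-geodesic `μ_t = ((1−t)id + tT)_#μ₀` given by the monotone rearrangement `T`,
`Ent(μ_t) ≤ (1−t)Ent(μ₀) + t Ent(μ₁)`. -/
theorem stmt_10 (μ₀ μ₁ : Measure ℝ) [IsProbabilityMeasure μ₀] [IsProbabilityMeasure μ₁]
    (hac₀ : μ₀ ≪ volume) (hac₁ : μ₁ ≪ volume)
    (hmom₀ : ∫⁻ x, ENNReal.ofReal (x ^ 2) ∂μ₀ < ⊤)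
    (hmom₁ : ∫⁻ x, ENNReal.ofReal (x ^ 2) ∂μ₁ < ⊤)
    (hent₀ : entropy volume μ₀ ≠ ⊤) (hent₁ : entropy volume μ₁ ≠ ⊤)
    (T : ℝ → ℝ) (hTmono : Monotone T) (hTm : Measurable T) (hpush : μ₀.map T = μ₁)
    (t : ℝ) (ht : t ∈ Set.Icc (0:ℝ) 1) :
    entropy volume (μ₀.map (fun x => (1 - t) * x + t * T x)) ≤
      ((1 - t : ℝ) : EReal) * entropy volume μ₀ + ((t : ℝ) : EReal) * entropy volume μ₁ := by
  classical
  obtain ⟨ht0, ht1⟩ := ht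
  -- entropy of μ₀ as a real number
  have hcond₀ : μ₀ ≪ volume ∧ Integrable
      (fun x => (μ₀.rnDeriv volume x).toReal * Real.log (μ₀.rnDeriv volume x).toReal) volume := by
    by_contra h
    rw [entropy, if_neg h] at hent₀; exact hent₀ rfl
  have hE0 : entropy volume μ₀ =
      ((∫ x, (μ₀.rnDeriv volume x).toReal * Real.log (μ₀.rnDeriv volume x).toReal ∂volume : ℝ)
        : EReal) := by
    rw [entropy, if_pos hcond₀]
  have hcond₁ : μ₁ ≪ volume ∧ Integrable
      (fun x => (μ₁.rnDeriv volume x).toReal * Real.log (μ₁.rnDeriv volume x).toReal) volume := by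
    by_contra h
    rw [entropy, if_neg h] at hent₁; exact hent₁ rfl
  have hE1raw : entropy volume μ₁ =
      ((∫ x, (μ₁.rnDeriv volume x).toReal * Real.log (μ₁.rnDeriv volume x).toReal ∂volume : ℝ)
        : EReal) := by
    rw [entropy, if_pos hcond₁]
  rcases ht0.eq_or_lt with h0 | h0
  · -- t = 0
    subst h0
    have hfun : (fun x : ℝ => (1 - (0:ℝ)) * x + (0:ℝ) * T x) = fun x => x := by
      funext x; ring
    rw [hfun, Measure.map_id', hE0, hE1raw, ← EReal.coe_mul, ← EReal.coe_mul, ← EReal.coe_add,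
      EReal.coe_le_coe_iff]
    norm_num
  rcases ht1.eq_or_lt with h1 | h1
  · -- t = 1
    subst h1
    have hfun : (fun x : ℝ => (1 - (1:ℝ)) * x + (1:ℝ) * T x) = T := by
      funext x; ring
    rw [hfun, hpush, hE0, hE1raw, ← EReal.coe_mul, ← EReal.coe_mul, ← EReal.coe_add,
      EReal.coe_le_coe_iff]
    norm_num
  -- main case 0 < t < 1
  have hc : 0 < 1 - t := sub_pos.mpr h1
  set E : Set ℝ := {x | DifferentiableAt ℝ T x} ∩ {x | 0 < deriv T x} with hE_def
  have hEm : MeasurableSet E :=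
    (measurableSet_of_differentiableAt ℝ T).inter (measurableSet_lt measurable_const
      (measurable_deriv T))
  have hnullE : μ₀ Eᶜ = 0 := ae_deriv_pos μ₀ μ₁ hac₀ hac₁ hTmono hTm hpush
  set S : ℝ → ℝ := fun x => (1 - t) * x + t * T x with hS_def
  have hSm : Measurable S := (measurable_id.const_mul (1 - t)).add (hTm.const_mul t)
  have hSd : ∀ x ∈ E, HasDerivAt S ((1 - t) + t * deriv T x) x := by
    intro x hx
    have h1' := (hx.1.hasDerivAt).const_mul t
    have h2' := (hasDerivAt_id x).const_mul (1 - t)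
    exact (h2'.add h1').congr_deriv (by ring)
  have hSderiv : ∀ x ∈ E, deriv S x = (1 - t) + t * deriv T x :=
    fun x hx => (hSd x hx).deriv
  have hSdiff : ∀ x ∈ E, HasDerivAt S (deriv S x) x :=
    fun x hx => (hSderiv x hx) ▸ hSd x hx
  have hSpos : ∀ x ∈ E, 0 < deriv S x := by
    intro x hx
    rw [hSderiv x hx]
    have hd : 0 < deriv T x := hx.2
    nlinarith [mul_pos h0 hd]
  have hSmono : StrictMono S := by
    intro a b hab
    have h3 := hTmono hab.le
    simp only [hS_def]
    nlinarith
  have hTE := entropy_map μ₀ hac₀ hTm hEm (fun x hx => hx.1.hasDerivAt)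
    (fun x hx => hx.2) (injOn_pos hTmono) hnullE
  rw [hpush] at hTE
  have hSE := entropy_map μ₀ hac₀ hSm hEm hSdiff hSpos (hSmono.injective.injOn) hnullE
  set φf : ℝ → ℝ :=
    fun x => (μ₀.rnDeriv volume x).toReal * Real.log (μ₀.rnDeriv volume x).toReal with hφf
  set LT : ℝ → ℝ := fun x => φf x - (μ₀.rnDeriv volume x).toReal * Real.log (deriv T x) with hLT
  set LS : ℝ → ℝ := fun x => φf x - (μ₀.rnDeriv volume x).toReal * Real.log (deriv S x) with hLS
  have hIφ : Integrable φf volume := hcond₀.2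
  have hIT : Integrable LT volume := by
    by_contra h
    rw [if_neg h] at hTE
    exact hent₁ hTE
  have hE1 : entropy volume μ₁ = ((∫ x, LT x ∂volume : ℝ) : EReal) := by
    rw [hTE, if_pos hIT]
  have hIr : Integrable (fun x => (μ₀.rnDeriv volume x).toReal) volume :=
    Measure.integrable_toReal_rnDeriv
  have haeE : ∀ᵐ x ∂volume, x ∉ E → μ₀.rnDeriv volume x = 0 :=
    ae_rnDeriv_zero_off μ₀ hac₀ hEm hnullE
  -- integrability of LS by domination
  have hILS : Integrable LS volume := by
    have hmeasLS : AEStronglyMeasurable LS volume := by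
      refine (Measurable.aestronglyMeasurable ?_)
      exact ((Measure.measurable_rnDeriv _ _).ennreal_toReal.mul
          (Real.measurable_log.comp (Measure.measurable_rnDeriv _ _).ennreal_toReal)).sub
        ((Measure.measurable_rnDeriv _ _).ennreal_toReal.mul
          (Real.measurable_log.comp (measurable_deriv S)))
    have hIM : Integrable (fun x => |φf x| +
        (|Real.log (1 - t)| * (μ₀.rnDeriv volume x).toReal + |φf x - LT x|)) volume :=
      hIφ.abs.add ((hIr.const_mul _).add (hIφ.sub hIT).abs)
    refine Integrable.mono' hIM hmeasLS ?_
    filter_upwards [haeE] with x hx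
    by_cases hxE : x ∈ E
    · have hd : 0 < deriv T x := hxE.2
      have h5 : |Real.log (deriv S x)| ≤ |Real.log (1 - t)| + |Real.log (deriv T x)| := by
        rw [hSderiv x hxE]
        exact abs_log_combo_le hc (by ring) h0.le hd
      have hq0 : (0:ℝ) ≤ (μ₀.rnDeriv volume x).toReal := ENNReal.toReal_nonneg
      have h6 : φf x - LT x = (μ₀.rnDeriv volume x).toReal * Real.log (deriv T x) := by
        simp [hLT]
      have h7 : ‖LS x‖ ≤ |φf x| + (μ₀.rnDeriv volume x).toReal * |Real.log (deriv S x)| := by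
        have habs : |(μ₀.rnDeriv volume x).toReal * Real.log (deriv S x)|
            = (μ₀.rnDeriv volume x).toReal * |Real.log (deriv S x)| := by
          rw [abs_mul, abs_of_nonneg hq0]
        simp only [hLS, Real.norm_eq_abs]
        calc |φf x - (μ₀.rnDeriv volume x).toReal * Real.log (deriv S x)|
            ≤ |φf x| + |(μ₀.rnDeriv volume x).toReal * Real.log (deriv S x)| := abs_sub _ _
          _ = |φf x| + (μ₀.rnDeriv volume x).toReal * |Real.log (deriv S x)| := by rw [habs]
      have h8 : (μ₀.rnDeriv volume x).toReal * |Real.log (deriv S x)| ≤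
          |Real.log (1 - t)| * (μ₀.rnDeriv volume x).toReal +
            (μ₀.rnDeriv volume x).toReal * |Real.log (deriv T x)| := by
        nlinarith [mul_le_mul_of_nonneg_left h5 hq0]
      have h9 : (μ₀.rnDeriv volume x).toReal * |Real.log (deriv T x)| = |φf x - LT x| := by
        rw [h6, abs_mul, abs_of_nonneg hq0]
      linarith
    · have h6 : μ₀.rnDeriv volume x = 0 := hx hxE
      have h7 : LS x = 0 := by simp [hLS, hφf, h6]
      rw [h7]
      simp only [norm_zero]
      positivity
  have hES : entropy volume (μ₀.map S) = ((∫ x, LS x ∂volume : ℝ) : EReal) := by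
    rw [hSE, if_pos hILS]
  -- the pointwise displacement convexity inequality
  have hptw : ∀ᵐ x ∂volume, LS x ≤ (1 - t) * φf x + t * LT x := by
    filter_upwards [haeE] with x hx
    by_cases hxE : x ∈ E
    · have hd : 0 < deriv T x := hxE.2
      have hq0 : (0:ℝ) ≤ (μ₀.rnDeriv volume x).toReal := ENNReal.toReal_nonneg
      have hlog := mul_log_le hc h0.le (by ring) hd
      have h5 := mul_le_mul_of_nonneg_left hlog hq0
      simp only [hLS, hLT]
      rw [hSderiv x hxE]
      nlinarith
    · have h6 : μ₀.rnDeriv volume x = 0 := hx hxE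
      simp [hLS, hLT, hφf, h6]
  have hIcomb : Integrable (fun x => (1 - t) * φf x + t * LT x) volume :=
    (hIφ.const_mul _).add (hIT.const_mul _)
  have hint : ∫ x, LS x ∂volume ≤ (1 - t) * ∫ x, φf x ∂volume + t * ∫ x, LT x ∂volume := by
    have h5 := integral_mono_ae hILS hIcomb hptw
    rwa [integral_add (hIφ.const_mul _) (hIT.const_mul _), integral_const_mul,
      integral_const_mul] at h5
  rw [hES, hE0, hE1, ← EReal.coe_mul, ← EReal.coe_mul, ← EReal.coe_add, EReal.coe_le_coe_iff]
  exact hint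
end
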